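/- Let k be a field of characteristic 0 and let L = FreeLieAlgebra k (Fin 2) be the free Lie algebra on two generators a, b. Let L′ = ⁅L, L⁆ be the derived ideal and L′′ = ⁅L′, L′⁆ the second derived ideal. Then the images in the quotient k-vector space L′/L′′ of the elements (ad a)^p (ad b)^q (⁅a, b⁆), for (p, q) ∈ ℕ × ℕ, form a basis of L′/L′′. -/

import Mathlib

/-- The element `(ad a)^p (ad b)^q (⁅a, b⁆)` of the free Lie algebra on two
generators `a = of 0`, `b = of 1`. -/
noncomputable def adWord (k : Type) [Field k] [CharZero k] (pq : ℕ × ℕ) :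
    FreeLieAlgebra k (Fin 2) :=
  (fun y => ⁅FreeLieAlgebra.of k (0 : Fin 2), y⁆)^[pq.1]
    ((fun y => ⁅FreeLieAlgebra.of k (1 : Fin 2), y⁆)^[pq.2]
      ⁅FreeLieAlgebra.of k (0 : Fin 2), FreeLieAlgebra.of k (1 : Fin 2)⁆)

attribute [local instance] LieRing.ofAssociativeRing

section Aux
set_option linter.unusedSectionVars false

open MvPolynomial

variable (k : Type) [Field k] [CharZero k]

/-- Generation: any Lie subalgebra of the free Lie algebra on `Fin 2`
containing the generators is everything. -/
lemma FreeLie.gen_lemma (S : LieSubalgebra k (FreeLieAlgebra k (Fin 2)))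
    (h : ∀ i, FreeLieAlgebra.of k i ∈ S) (x : FreeLieAlgebra k (Fin 2)) : x ∈ S := by
  let f : Fin 2 → S := fun i => ⟨FreeLieAlgebra.of k i, h i⟩
  have key : S.incl.comp (FreeLieAlgebra.lift k f) = LieHom.id := by
    apply (FreeLieAlgebra.lift k).symm.injective
    funext i
    simp [FreeLieAlgebra.lift_symm_apply, FreeLieAlgebra.lift_of_apply, f]
  have h2 : S.incl.comp (FreeLieAlgebra.lift k f) x = x := by rw [key]; rfl
  rw [← h2]
  exact (FreeLieAlgebra.lift k f x).2

/-- The images of the two generators in the matrix model. -/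
noncomputable def FreeLie.gg : Fin 2 → Matrix (Fin 2) (Fin 2) (MvPolynomial (Fin 3) k) :=
  ![!![X 0, 0; 0, 0], !![X 1, X 2; 0, 0]]

/-- The morphism from the free Lie algebra to the matrix model. -/
noncomputable def FreeLie.phi :
    FreeLieAlgebra k (Fin 2) →ₗ⁅k⁆ Matrix (Fin 2) (Fin 2) (MvPolynomial (Fin 3) k) :=
  FreeLieAlgebra.lift k (FreeLie.gg k)

lemma FreeLie.phi_of (i : Fin 2) :
    FreeLie.phi k (FreeLieAlgebra.of k i) = FreeLie.gg k i :=
  FreeLieAlgebra.lift_of_apply (FreeLie.gg k) i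

lemma FreeLie.lie_mat (s t u v : MvPolynomial (Fin 3) k) :
    ⁅(!![s, t; 0, 0] : Matrix (Fin 2) (Fin 2) (MvPolynomial (Fin 3) k)), !![u, v; 0, 0]⁆
      = !![0, s*v - u*t; 0, 0] := by
  ext i j
  fin_cases i <;> fin_cases j <;>
    simp [Ring.lie_def, Matrix.mul_apply, Fin.sum_univ_two] <;> ring

lemma adWord_succ_left (p q : ℕ) :
    adWord k (p+1, q) = ⁅FreeLieAlgebra.of k (0 : Fin 2), adWord k (p, q)⁆ := by
  simp only [adWord]
  exact Function.iterate_succ_apply' _ p _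

lemma adWord_zero_succ (q : ℕ) :
    adWord k (0, q+1) = ⁅FreeLieAlgebra.of k (1 : Fin 2), adWord k (0, q)⁆ := by
  simp only [adWord, Function.iterate_zero_apply]
  exact Function.iterate_succ_apply' _ q _

lemma adWord_zero_zero :
    adWord k (0, 0) = ⁅FreeLieAlgebra.of k (0 : Fin 2), FreeLieAlgebra.of k (1 : Fin 2)⁆ := rfl

lemma FreeLie.phi_adWord (p q : ℕ) :
    FreeLie.phi k (adWord k (p, q)) = !![0, X 0 ^ (p+1) * X 1 ^ q * X 2; 0, 0] := by
  induction p with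
  | zero =>
    induction q with
    | zero =>
      rw [adWord_zero_zero, LieHom.map_lie, FreeLie.phi_of, FreeLie.phi_of]
      show ⁅(!![X 0, 0; 0, 0] : Matrix (Fin 2) (Fin 2) (MvPolynomial (Fin 3) k)),
        !![X 1, X 2; 0, 0]⁆ = _
      rw [FreeLie.lie_mat]
      ext i j
      fin_cases i <;> fin_cases j <;> simp <;> ring
    | succ q ih =>
      rw [adWord_zero_succ, LieHom.map_lie, FreeLie.phi_of, ih]
      show ⁅(!![X 1, X 2; 0, 0] : Matrix (Fin 2) (Fin 2) (MvPolynomial (Fin 3) k)), _⁆ = _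
      rw [FreeLie.lie_mat]
      ext i j
      fin_cases i <;> fin_cases j <;> simp <;> ring
  | succ p ih =>
    rw [adWord_succ_left, LieHom.map_lie, FreeLie.phi_of, ih]
    show ⁅(!![X 0, 0; 0, 0] : Matrix (Fin 2) (Fin 2) (MvPolynomial (Fin 3) k)), _⁆ = _
    rw [FreeLie.lie_mat]
    ext i j
    fin_cases i <;> fin_cases j <;> simp <;> ring

lemma FreeLie.mono_li : LinearIndependent k
    (fun pq : ℕ × ℕ => (X 0 ^ (pq.1+1) * X 1 ^ pq.2 * X 2 : MvPolynomial (Fin 3) k)) := by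
  have h1 := (MvPolynomial.basisMonomials (Fin 3) k).linearIndependent
  have hinj : Function.Injective
      (fun pq : ℕ × ℕ => (Finsupp.single (0 : Fin 3) (pq.1+1) + Finsupp.single 1 pq.2
        + Finsupp.single 2 1 : Fin 3 →₀ ℕ)) := by
    intro pq pq' h
    have h0 := DFunLike.congr_fun h 0
    have h1 := DFunLike.congr_fun h 1
    simp [Finsupp.single_apply] at h0 h1
    exact Prod.ext h0 h1
  have h2 := h1.comp _ hinj
  convert h2 using 1
  funext pq
  rw [coe_basisMonomials]
  rw [show (X 2 : MvPolynomial (Fin 3) k) = X 2 ^ 1 from (pow_one _).symm,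
    X_pow_eq_monomial, X_pow_eq_monomial, X_pow_eq_monomial, monomial_mul, monomial_mul]
  simp
  all_goals rfl

/-- The linear embedding of polynomials as corner matrices. -/
noncomputable def FreeLie.jmat :
    MvPolynomial (Fin 3) k →ₗ[k] Matrix (Fin 2) (Fin 2) (MvPolynomial (Fin 3) k) where
  toFun s := !![0, s; 0, 0]
  map_add' s t := by ext i j; fin_cases i <;> fin_cases j <;> simp
  map_smul' c s := by ext i j; fin_cases i <;> fin_cases j <;> simp

lemma FreeLie.jmat_inj : Function.Injective (FreeLie.jmat k) := by
  intro s t h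
  have := congrFun (congrFun h 0) 1
  simpa [FreeLie.jmat] using this

lemma FreeLie.mat_li : LinearIndependent k
    (fun pq : ℕ × ℕ =>
      (!![0, X 0 ^ (pq.1+1) * X 1 ^ pq.2 * X 2; 0, 0] :
        Matrix (Fin 2) (Fin 2) (MvPolynomial (Fin 3) k))) := by
  have := (FreeLie.mono_li k).map' (FreeLie.jmat k)
    (LinearMap.ker_eq_bot.mpr (FreeLie.jmat_inj k))
  convert this using 1
  all_goals rfl

/-- The image of `phi` lies in the "upper-row" subalgebra. -/
lemma FreeLie.phi_bot_row (z : FreeLieAlgebra k (Fin 2)) :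
    FreeLie.phi k z 1 0 = 0 ∧ FreeLie.phi k z 1 1 = 0 := by
  let S : LieSubalgebra k (FreeLieAlgebra k (Fin 2)) :=
    { carrier := {z | FreeLie.phi k z 1 0 = 0 ∧ FreeLie.phi k z 1 1 = 0}
      add_mem' := fun hx hy => by
        constructor <;> simp_all [map_add, Matrix.add_apply]
      zero_mem' := by simp [map_zero]
      smul_mem' := fun t x hx => by
        constructor <;> simp_all [map_smul, Matrix.smul_apply]
      lie_mem' := fun {x y} hx hy => by
        constructor <;>
          simp [LieHom.map_lie, Ring.lie_def, Matrix.sub_apply, Matrix.mul_apply,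
            Fin.sum_univ_two, hx.1, hx.2, hy.1, hy.2] }
  exact FreeLie.gen_lemma k S
    (fun i => by
      fin_cases i <;>
        constructor <;> simp [S, FreeLie.phi_of, FreeLie.gg]) z

end Aux

/-- The images in `L′/L′′` of the elements `(ad a)^p (ad b)^q (⁅a, b⁆)`,
`(p, q) ∈ ℕ × ℕ`, form a basis of `L′/L′′`. -/
theorem basis_of_derived_quotient (k : Type) [Field k] [CharZero k]
    (L' L'' : LieIdeal k (FreeLieAlgebra k (Fin 2)))
    (hL' : L' = ⁅(⊤ : LieIdeal k (FreeLieAlgebra k (Fin 2))),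
      (⊤ : LieIdeal k (FreeLieAlgebra k (Fin 2)))⁆)
    (hL'' : L'' = ⁅L', L'⁆) :
    LinearIndependent k
      (fun pq : ℕ × ℕ => (L''.toSubmodule).mkQ (adWord k pq)) ∧
    Submodule.span k
        (Set.range fun pq : ℕ × ℕ => (L''.toSubmodule).mkQ (adWord k pq)) =
      Submodule.map (L''.toSubmodule).mkQ L'.toSubmodule := by
  set a := FreeLieAlgebra.of k (0 : Fin 2) with ha
  set b := FreeLieAlgebra.of k (1 : Fin 2) with hb
  -- basic membership facts
  have hab : ⁅a, b⁆ ∈ L' := by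
    rw [hL']; exact LieSubmodule.lie_mem_lie (LieSubmodule.mem_top a) (LieSubmodule.mem_top b)
  have hadL' : ∀ p q : ℕ, adWord k (p, q) ∈ L' := by
    intro p
    induction p with
    | zero =>
      intro q
      induction q with
      | zero => rw [adWord_zero_zero]; exact hab
      | succ q ih => rw [adWord_zero_succ]; exact L'.lie_mem ih
    | succ p ih =>
      intro q
      rw [adWord_succ_left]; exact L'.lie_mem (ih q)
  have hba : ⁅b, a⁆ ∈ L' := by
    rw [← lie_skew]; exact L'.neg_mem hab
  -- the correction lemma: ⁅b, adWord (p,q)⁆ = adWord (p,q+1) + (element of L'')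
  have hkey : ∀ p q : ℕ, ∃ e ∈ L'', ⁅b, adWord k (p, q)⁆ = adWord k (p, q+1) + e := by
    intro p
    induction p with
    | zero =>
      intro q
      exact ⟨0, L''.zero_mem, by rw [adWord_zero_succ, add_zero]⟩
    | succ p ih =>
      intro q
      obtain ⟨e, he, hee⟩ := ih q
      refine ⟨⁅⁅b, a⁆, adWord k (p, q)⁆ + ⁅a, e⁆, ?_, ?_⟩
      · refine L''.add_mem ?_ (L''.lie_mem he)
        rw [hL'']
        exact LieSubmodule.lie_mem_lie hba (hadL' p q)
      · rw [adWord_succ_left, leibniz_lie, hee, lie_add, adWord_succ_left]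
        abel
  -- the submodule N = L'' + span (adWords)
  set N : Submodule k (FreeLieAlgebra k (Fin 2)) :=
    L''.toSubmodule ⊔ Submodule.span k (Set.range (adWord k)) with hN
  have hL''N : L''.toSubmodule ≤ N := le_sup_left
  have hspanN : Submodule.span k (Set.range (adWord k)) ≤ N := le_sup_right
  have hadN : ∀ pq : ℕ × ℕ, adWord k pq ∈ N :=
    fun pq => hspanN (Submodule.subset_span ⟨pq, rfl⟩)
  -- N is stable under bracketing with a and with b
  have hNa : ∀ n ∈ N, ⁅a, n⁆ ∈ N := by
    intro n hn
    obtain ⟨u, hu, v, hv, rfl⟩ := Submodule.mem_sup.mp hn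
    rw [lie_add]
    refine N.add_mem (hL''N (L''.lie_mem hu)) ?_
    refine Submodule.span_induction ?_ ?_ ?_ ?_ hv
    · rintro _ ⟨⟨p, q⟩, rfl⟩
      rw [← adWord_succ_left]
      exact hadN (p+1, q)
    · rw [lie_zero]; exact N.zero_mem
    · intro x y _ _ hx hy; rw [lie_add]; exact N.add_mem hx hy
    · intro t x _ hx; rw [lie_smul]; exact N.smul_mem t hx
  have hNb : ∀ n ∈ N, ⁅b, n⁆ ∈ N := by
    intro n hn
    obtain ⟨u, hu, v, hv, rfl⟩ := Submodule.mem_sup.mp hn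
    rw [lie_add]
    refine N.add_mem (hL''N (L''.lie_mem hu)) ?_
    refine Submodule.span_induction ?_ ?_ ?_ ?_ hv
    · rintro _ ⟨⟨p, q⟩, rfl⟩
      obtain ⟨e, he, hee⟩ := hkey p q
      rw [hee]
      exact N.add_mem (hadN (p, q+1)) (hL''N he)
    · rw [lie_zero]; exact N.zero_mem
    · intro x y _ _ hx hy; rw [lie_add]; exact N.add_mem hx hy
    · intro t x _ hx; rw [lie_smul]; exact N.smul_mem t hx
  -- N is stable under bracketing with everything
  have hNall : ∀ x : FreeLieAlgebra k (Fin 2), ∀ n ∈ N, ⁅x, n⁆ ∈ N := by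
    let S : LieSubalgebra k (FreeLieAlgebra k (Fin 2)) :=
      { carrier := {x | ∀ n ∈ N, ⁅x, n⁆ ∈ N}
        add_mem' := fun hx hy n hn => by rw [add_lie]; exact N.add_mem (hx n hn) (hy n hn)
        zero_mem' := fun n hn => by rw [zero_lie]; exact N.zero_mem
        smul_mem' := fun t x hx n hn => by rw [smul_lie]; exact N.smul_mem t (hx n hn)
        lie_mem' := fun {x y} hx hy n hn => by
          rw [lie_lie]
          exact N.sub_mem (hx _ (hy n hn)) (hy _ (hx n hn)) }
    intro x
    exact FreeLie.gen_lemma k S (fun i => by fin_cases i; exacts [hNa, hNb]) x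
  -- all brackets lie in N
  have hbr : ∀ x y : FreeLieAlgebra k (Fin 2), ⁅x, y⁆ ∈ N := by
    have hA : ∀ i : Fin 2, ∀ y, ⁅FreeLieAlgebra.of k i, y⁆ ∈ N := by
      intro i
      let B : LieSubalgebra k (FreeLieAlgebra k (Fin 2)) :=
        { carrier := {y | ⁅FreeLieAlgebra.of k i, y⁆ ∈ N}
          add_mem' := fun hx hy => by
            simp only [Set.mem_setOf_eq] at *
            rw [lie_add]; exact N.add_mem hx hy
          zero_mem' := by
            simp only [Set.mem_setOf_eq]
            rw [lie_zero]; exact N.zero_mem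
          smul_mem' := fun t x hx => by
            simp only [Set.mem_setOf_eq] at *
            rw [lie_smul]; exact N.smul_mem t hx
          lie_mem' := fun {x y} hx hy => by
            simp only [Set.mem_setOf_eq] at *
            rw [leibniz_lie]
            refine N.add_mem ?_ (hNall _ _ hy)
            rw [← lie_skew]
            exact N.neg_mem (hNall _ _ hx) }
      intro y
      refine FreeLie.gen_lemma k B (fun j => ?_) y
      fin_cases i <;> fin_cases j
      · show ⁅a, a⁆ ∈ N; rw [lie_self]; exact N.zero_mem
      · show ⁅a, b⁆ ∈ N; rw [← adWord_zero_zero]; exact hadN (0, 0)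
      · show ⁅b, a⁆ ∈ N
        rw [← lie_skew, ← adWord_zero_zero]
        exact N.neg_mem (hadN (0, 0))
      · show ⁅b, b⁆ ∈ N; rw [lie_self]; exact N.zero_mem
    let T : LieSubalgebra k (FreeLieAlgebra k (Fin 2)) :=
      { carrier := {x | ∀ y, ⁅x, y⁆ ∈ N}
        add_mem' := fun hx hy y => by
          simp only [Set.mem_setOf_eq] at *
          rw [add_lie]; exact N.add_mem (hx y) (hy y)
        zero_mem' := fun y => by rw [zero_lie]; exact N.zero_mem
        smul_mem' := fun t x hx y => by
          simp only [Set.mem_setOf_eq] at *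
          rw [smul_lie]; exact N.smul_mem t (hx y)
        lie_mem' := fun {x y} hx hy z => by
          simp only [Set.mem_setOf_eq] at *
          rw [lie_lie]
          exact N.sub_mem (hx _) (hy _) }
    intro x
    exact FreeLie.gen_lemma k T (fun i => hA i) x
  -- L' ≤ N
  have hL'N : L'.toSubmodule ≤ N := by
    rw [hL', LieSubmodule.lieIdeal_oper_eq_linear_span']
    rw [Submodule.span_le]
    rintro _ ⟨x, -, y, -, rfl⟩
    exact hbr x y
  -- phi kills L''
  have hW : ∀ z ∈ L', FreeLie.phi k z 0 0 = 0 := by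
    intro z hz
    rw [hL', ← LieSubmodule.mem_toSubmodule,
      LieSubmodule.lieIdeal_oper_eq_linear_span'] at hz
    have hz' := hz
    refine Submodule.span_induction ?_ ?_ ?_ ?_ hz'
    · rintro _ ⟨x, -, y, -, rfl⟩
      have hx := FreeLie.phi_bot_row k x
      have hy := FreeLie.phi_bot_row k y
      simp [LieHom.map_lie, Ring.lie_def, Matrix.sub_apply, Matrix.mul_apply,
        Fin.sum_univ_two, hx.1, hy.1]
      ring
    · simp
    · intro x y _ _ hx hy; simp [map_add, Matrix.add_apply, hx, hy]
    · intro t x _ hx; simp [map_smul, Matrix.smul_apply, hx]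
  have hker : ∀ z ∈ L'', FreeLie.phi k z = 0 := by
    intro z hz
    rw [hL'', ← LieSubmodule.mem_toSubmodule,
      LieSubmodule.lieIdeal_oper_eq_linear_span'] at hz
    have hz' := hz
    refine Submodule.span_induction ?_ ?_ ?_ ?_ hz'
    · rintro _ ⟨x, hx, y, hy, rfl⟩
      have hx1 := FreeLie.phi_bot_row k x
      have hy1 := FreeLie.phi_bot_row k y
      have hx0 := hW x hx
      have hy0 := hW y hy
      rw [LieHom.map_lie]
      ext i j
      fin_cases i <;> fin_cases j <;>
        simp [Ring.lie_def, Matrix.sub_apply, Matrix.mul_apply, Fin.sum_univ_two,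
          hx1.1, hx1.2, hy1.1, hy1.2, hx0, hy0]
    · simp
    · intro x y _ _ hx hy; rw [map_add, hx, hy, add_zero]
    · intro t x _ hx; rw [map_smul, hx, smul_zero]
  -- the induced map on the quotient
  have hkerle : L''.toSubmodule ≤ LinearMap.ker (FreeLie.phi k).toLinearMap := by
    intro z hz
    rw [LinearMap.mem_ker]
    exact hker z hz
  set Φ : (FreeLieAlgebra k (Fin 2) ⧸ L''.toSubmodule) →ₗ[k]
      Matrix (Fin 2) (Fin 2) (MvPolynomial (Fin 3) k) :=
    Submodule.liftQ _ (FreeLie.phi k).toLinearMap hkerle with hPhi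
  have hΦv : ∀ pq : ℕ × ℕ, Φ ((L''.toSubmodule).mkQ (adWord k pq)) =
      !![0, MvPolynomial.X 0 ^ (pq.1+1) * MvPolynomial.X 1 ^ pq.2 * MvPolynomial.X 2; 0, 0] := by
    rintro ⟨p, q⟩
    rw [hPhi, Submodule.mkQ_apply, Submodule.liftQ_apply]
    exact FreeLie.phi_adWord k p q
  constructor
  · -- linear independence
    apply LinearIndependent.of_comp Φ
    have : (fun pq : ℕ × ℕ => Φ ((L''.toSubmodule).mkQ (adWord k pq))) =
        fun pq : ℕ × ℕ =>
          (!![0, MvPolynomial.X 0 ^ (pq.1+1) * MvPolynomial.X 1 ^ pq.2 * MvPolynomial.X 2; 0, 0] :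
            Matrix (Fin 2) (Fin 2) (MvPolynomial (Fin 3) k)) := funext hΦv
    rw [show (Φ ∘ fun pq : ℕ × ℕ => (L''.toSubmodule).mkQ (adWord k pq)) =
        fun pq : ℕ × ℕ => Φ ((L''.toSubmodule).mkQ (adWord k pq)) from rfl, this]
    exact FreeLie.mat_li k
  · -- span
    apply le_antisymm
    · rw [Submodule.span_le]
      rintro _ ⟨⟨p, q⟩, rfl⟩
      exact Submodule.mem_map_of_mem (hadL' p q)
    · rw [Submodule.map_le_iff_le_comap]
      intro z hz
      have hzN : z ∈ N := hL'N hz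
      obtain ⟨u, hu, v, hv, rfl⟩ := Submodule.mem_sup.mp hzN
      rw [Submodule.mem_comap, map_add]
      have hu0 : (L''.toSubmodule).mkQ u = 0 := by
        rw [← LinearMap.mem_ker, Submodule.ker_mkQ]
        exact hu
      rw [hu0, zero_add]
      have : Submodule.span k (Set.range fun pq : ℕ × ℕ =>
          (L''.toSubmodule).mkQ (adWord k pq)) =
          Submodule.map (L''.toSubmodule).mkQ (Submodule.span k (Set.range (adWord k))) := by
        rw [Submodule.map_span, ← Set.range_comp]
        rfl
      rw [this]
      exact Submodule.mem_map_of_mem hv
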